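/- Let A = ℕ ∩ ⋃_{n∈ℕ} [4^n, (2 - 1/n)·4^n) and let A' = A ∪ (2ℕ + 1) (A together with all odd numbers). Then the upper density of A' equals 5/6 and there is no infinite set B ⊆ ℕ with B + B ⊆ A'. -/

import Mathlib

open Filter
open scoped Classical

noncomputable def countIn (A : Set ℕ) (N : ℕ) : ℕ :=
  ((Finset.Icc 1 N).filter (fun n => n ∈ A)).card

noncomputable def upperDensity (A : Set ℕ) : ℝ :=
  limsup (fun N => (countIn A N : ℝ) / N) atTop

noncomputable def lowerDensity (A : Set ℕ) : ℝ :=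
  liminf (fun N => (countIn A N : ℝ) / N) atTop

def hasDensity (A : Set ℕ) (d : ℝ) : Prop :=
  Tendsto (fun N => (countIn A N : ℝ) / N) atTop (nhds d)

def Ar : Set ℕ := {m : ℕ | ∃ n : ℕ, 1 ≤ n ∧ 4 ^ n ≤ m ∧ (m : ℝ) < (2 - 1 / n) * 4 ^ n}

def Od : Set ℕ := {m : ℕ | m % 2 = 1}

def ee (k : ℕ) : ℕ := ((2 * k - 1) * 4 ^ k - 1) / k

lemma memIffAux (m n : ℕ) (hn : 1 ≤ n) :
    ((m : ℝ) < (2 - 1 / n) * 4 ^ n) ↔ m * n < (2 * n - 1) * 4 ^ n := by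
  have hn' : (0:ℝ) < n := by exact_mod_cast hn
  have key : (2 - 1/(n:ℝ)) * 4 ^ n = ((((2*n-1) * 4^n : ℕ)) : ℝ) / n := by
    push_cast [Nat.cast_sub (by omega : 1 ≤ 2*n)]
    field_simp
  rw [key, lt_div_iff₀ hn']
  constructor
  · intro h; exact_mod_cast h
  · intro h; exact_mod_cast h

lemma memArIff (m : ℕ) :
    m ∈ Ar ↔ ∃ n : ℕ, 1 ≤ n ∧ 4 ^ n ≤ m ∧ m ≤ ee n := by
  constructor
  · rintro ⟨n, h1, h2, h3⟩
    refine ⟨n, h1, h2, ?_⟩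
    have h4 := (memIffAux m n h1).1 h3
    have h5 : 1 ≤ (2*n-1) * 4^n :=
      Nat.mul_pos (by omega) (Nat.pow_pos (by norm_num))
    have : m * n ≤ (2*n-1) * 4^n - 1 := by omega
    exact (Nat.le_div_iff_mul_le (by omega)).2 this
  · rintro ⟨n, h1, h2, h3⟩
    refine ⟨n, h1, h2, (memIffAux m n h1).2 ?_⟩
    have := (Nat.le_div_iff_mul_le (show 0 < n by omega)).1 h3
    have h5 : 1 ≤ (2*n-1) * 4^n :=
      Nat.mul_pos (by omega) (Nat.pow_pos (by norm_num))
    omega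

lemma ee_lt (k : ℕ) (hk : 1 ≤ k) : ee k < 2 * 4 ^ k := by
  unfold ee
  rw [Nat.div_lt_iff_lt_mul (by omega : 0 < k)]
  have h0 : 1 ≤ (2*k-1) * 4^k :=
    Nat.mul_pos (by omega) (Nat.pow_pos (by norm_num))
  have h1 : (2*k-1) * 4^k ≤ 2 * 4^k * k := by
    calc (2*k-1) * 4^k ≤ 2*k * 4^k := Nat.mul_le_mul_right _ (by omega)
    _ = 2 * 4^k * k := by ring
  calc (2*k-1) * 4^k - 1 < (2*k-1) * 4^k := Nat.sub_lt (by omega) one_pos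
  _ ≤ 2 * 4^k * k := h1

lemma ee_ge (k : ℕ) (hk : 2 ≤ k) : 4 ^ k ≤ ee k := by
  unfold ee
  rw [Nat.le_div_iff_mul_le (by omega : 0 < k)]
  have h2 : 1 ≤ 4^k := Nat.one_le_pow _ _ (by norm_num)
  have h3 : 4^k*k + 4^k ≤ (2*k-1) * 4^k := by
    calc 4^k*k + 4^k = (k+1) * 4^k := by ring
    _ ≤ (2*k-1) * 4^k := Nat.mul_le_mul_right _ (by omega)
  calc 4^k * k ≤ (2*k-1) * 4^k - 4^k := Nat.le_sub_of_add_le h3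
  _ ≤ (2*k-1) * 4^k - 1 := Nat.sub_le_sub_left h2 _

lemma ee_ge' (k : ℕ) (hk : 1 ≤ k) : 4 ^ k ≤ ee k + 1 := by
  rcases Nat.lt_or_ge k 2 with h | h
  · interval_cases k; decide
  · have := ee_ge k h; omega

lemma ee_real_ub (k : ℕ) (hk : 1 ≤ k) : (ee k : ℝ) ≤ (2 - 1/k) * 4 ^ k := by
  have h1 : ee k * k ≤ (2*k-1) * 4^k := Nat.div_mul_le_self _ _ |>.trans (by
    exact Nat.sub_le _ _)
  have hk' : (0:ℝ) < k := by exact_mod_cast hk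
  rw [show (2 - 1/(k:ℝ)) * 4^k = ((2*k-1 : ℕ) * 4^k : ℕ) / k by
    push_cast [Nat.cast_sub (by omega : 1 ≤ 2*k)]; field_simp]
  rw [le_div_iff₀ hk']
  exact_mod_cast h1

lemma ee_real_lb (k : ℕ) (hk : 1 ≤ k) : (2 - 1/(k:ℝ)) * 4 ^ k - 2 ≤ (ee k : ℝ) := by
  have hk' : (0:ℝ) < k := by exact_mod_cast hk
  set a := (2*k-1) * 4^k - 1 with ha
  have hmod := Nat.div_add_mod a k
  have hmlt : a % k < k := Nat.mod_lt _ (by omega)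
  have hlt : a < k * (ee k) + k := by
    have h1 : ee k = a / k := by rw [ha]; rfl
    rw [h1]
    calc a = k * (a/k) + a % k := hmod.symm
    _ < k * (a/k) + k := by omega
  have hcast : (a:ℝ) = (2*(k:ℝ)-1) * 4^k - 1 := by
    rw [ha]
    have h0 : 1 ≤ (2*k-1) * 4^k :=
      Nat.mul_pos (by omega) (Nat.pow_pos (by norm_num))
    push_cast [Nat.cast_sub (by omega : 1 ≤ 2*k), Nat.cast_sub h0]
    ring
  have hlt' : (a:ℝ) < k * (ee k) + k := by exact_mod_cast hlt
  rw [hcast] at hlt'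
  have hinv : 1/(k:ℝ) ≤ 1 := by
    rw [div_le_one hk']; exact_mod_cast hk
  have hexp : (k:ℝ) * ((2 - 1/k) * 4^k - 2) = (2*(k:ℝ)-1)*4^k - 2*k := by
    field_simp
  have hgoal : (k:ℝ) * ((2 - 1/(k:ℝ)) * 4^k - 2) ≤ k * ee k := by
    have hk'' : (1:ℝ) ≤ k := by exact_mod_cast hk
    rw [hexp]; linarith
  exact le_of_mul_le_mul_left hgoal hk'

lemma evenCard (a b : ℕ) :
    ((Finset.Icc a b).filter (fun m => m % 2 = 0)).card = b / 2 + 1 - (a + 1) / 2 := by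
  rcases le_or_gt a b with h | h
  · have : ((Finset.Icc a b).filter (fun m => m % 2 = 0)).card
        = (Finset.Icc ((a+1)/2) (b/2)).card := by
      apply Finset.card_nbij' (fun m => m / 2) (fun j => 2 * j)
      · intro m hm; simp only [Finset.mem_coe, Finset.mem_filter, Finset.mem_Icc] at *; omega
      · intro j hj; simp only [Finset.mem_coe, Finset.mem_filter, Finset.mem_Icc] at *; omega
      · intro m hm; simp only [Finset.mem_coe, Finset.mem_filter, Finset.mem_Icc] at *; try omega
      · intro j hj; simp only [Finset.mem_coe, Finset.mem_filter, Finset.mem_Icc] at *; try omega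
    rw [this, Nat.card_Icc]
  · rw [Finset.Icc_eq_empty_of_lt h]; simp; omega

lemma oddCard (N : ℕ) :
    ((Finset.Icc 1 N).filter (fun m => m % 2 = 1)).card = (N + 1) / 2 := by
  have h := Finset.card_filter_add_card_filter_not (s := Finset.Icc 1 N)
    (p := fun m => m % 2 = 0)
  have h2 : ((Finset.Icc 1 N).filter (fun m => ¬ m % 2 = 0)) =
      ((Finset.Icc 1 N).filter (fun m => m % 2 = 1)) := by
    apply Finset.filter_congr; intro m _; simp; try omega
  rw [evenCard, h2] at h
  rw [Nat.card_Icc] at h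
  omega

lemma pow4_even (k : ℕ) (hk : 1 ≤ k) : 4 ^ k % 2 = 0 := by
  have : (2:ℕ) ∣ 4 ^ k := dvd_pow (by norm_num) (by omega)
  omega

lemma geomIcc (m : ℕ) : ∑ k ∈ Finset.Icc 1 m, (4:ℝ)^k = (4^(m+1) - 4)/3 := by
  induction m with
  | zero => simp
  | succ n ih =>
    rw [Finset.sum_Icc_succ_top (by omega), ih,
      show n+1+1 = (n+1)+1 from rfl, pow_succ (4:ℝ) (n+1)]
    ring

lemma sumPowDiv : ∀ m : ℕ, 1 ≤ m → ∑ k ∈ Finset.Icc 1 m, (4:ℝ)^k / k ≤ 2 * 4^m / m := by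
  intro m
  induction m with
  | zero => omega
  | succ n ih =>
    intro _
    rcases Nat.eq_zero_or_pos n with rfl | hn
    · norm_num
    · rw [Finset.sum_Icc_succ_top (by omega)]
      have h0 : (0:ℝ) < n := by exact_mod_cast hn
      have h0' : (1:ℝ) ≤ n := by exact_mod_cast hn
      have h4 : (0:ℝ) < 4^n := by positivity
      have h1 : 2*(4:ℝ)^n/n ≤ 4^(n+1)/((n:ℝ)+1) := by
        rw [div_le_div_iff₀ h0 (by positivity), pow_succ]
        nlinarith
      have h2 := ih hn
      have h3 : (((n:ℕ)+1:ℕ):ℝ) = (n:ℝ)+1 := by push_cast; ring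
      rw [h3]
      have key : 2*(4:ℝ)^n/(n:ℝ) + 4^(n+1)/((n:ℝ)+1) ≤ 2*4^(n+1)/((n:ℝ)+1) := by
        have hr : 2*(4:ℝ)^(n+1)/((n:ℝ)+1) = 4^(n+1)/((n:ℝ)+1) + 4^(n+1)/((n:ℝ)+1) := by ring
        rw [hr]
        linarith
      linarith

noncomputable def FF (N : ℕ) : Finset ℕ :=
  (Finset.Icc 1 N).filter (fun m => m % 2 = 0 ∧ m ∈ Ar)

def GG (N k : ℕ) : Finset ℕ :=
  (Finset.Icc (4^k) (min N (ee k))).filter (fun m => m % 2 = 0)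

lemma countSplit (N : ℕ) :
    countIn (Ar ∪ Od) N = (N + 1) / 2 + (FF N).card := by
  have h1 : (Finset.Icc 1 N).filter (fun n => n ∈ Ar ∪ Od)
      = (Finset.Icc 1 N).filter (fun m => m % 2 = 1 ∨ (m % 2 = 0 ∧ m ∈ Ar)) := by
    apply Finset.filter_congr
    intro m _
    simp only [Set.mem_union, Od, Set.mem_setOf_eq, eq_iff_iff]
    constructor
    · rintro (h | h)
      · rcases Nat.mod_two_eq_zero_or_one m with h2 | h2
        · exact Or.inr ⟨h2, h⟩
        · exact Or.inl h2
      · exact Or.inl h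
    · rintro (h | ⟨hh1, hh2⟩)
      · exact Or.inr h
      · exact Or.inl hh2
  have h2 : ((Finset.Icc 1 N).filter (fun m => m % 2 = 1 ∨ (m % 2 = 0 ∧ m ∈ Ar))).card
      = (N + 1) / 2 + (FF N).card := by
    rw [Finset.filter_or, Finset.card_union_of_disjoint, oddCard]
    · rfl
    · rw [Finset.disjoint_left]
      intro m hm1 hm2
      simp only [Finset.mem_filter] at hm1 hm2
      omega
  have h3 := (congrArg Finset.card h1).trans h2
  unfold countIn
  convert h3 using 3

lemma GG_card_ub (N k : ℕ) (hk : 1 ≤ k) : (GG N k).card * 2 ≤ 4 ^ k := by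
  have hmono : (GG N k).card ≤ ((Finset.Icc (4^k) (ee k)).filter (fun m => m % 2 = 0)).card := by
    apply Finset.card_le_card
    apply Finset.filter_subset_filter
    exact Finset.Icc_subset_Icc_right (min_le_right _ _)
  rw [evenCard] at hmono
  have hlt := ee_lt k hk
  have hev := pow4_even k hk
  have h4pos : 0 < 4^k := Nat.pow_pos (by norm_num)
  omega

lemma GG_last_A (N k : ℕ) (hk : 1 ≤ k) (h1 : 4^k ≤ N) (h2 : N ≤ ee k) :
    (GG N k).card * 2 + 4 ^ k ≤ N + 2 := by
  have hcard : (GG N k).card = N / 2 + 1 - (4^k + 1) / 2 := by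
    unfold GG
    rw [min_eq_left h2, evenCard]
  have hev := pow4_even k hk
  omega

lemma GG_last_B (N k : ℕ) (hk : 1 ≤ k) (h2 : ee k < N) :
    (GG N k).card * 2 + 4 ^ k ≤ ee k + 2 := by
  have hcard : (GG N k).card = ee k / 2 + 1 - (4^k + 1) / 2 := by
    unfold GG
    rw [min_eq_right (le_of_lt h2), evenCard]
  have hev := pow4_even k hk
  have hge := ee_ge' k hk
  omega

lemma ratio_ub (N n : ℕ) (hn : 1 ≤ n) (h1 : 4^n ≤ N) (h2 : N < 4^(n+1)) :
    (countIn (Ar ∪ Od) N : ℝ) / N ≤ 5/6 + 3/n := by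
  obtain ⟨m', rfl⟩ : ∃ m', n = m' + 1 := ⟨n - 1, by omega⟩
  have hN0 : 0 < N := lt_of_lt_of_le (Nat.pow_pos (by norm_num)) h1
  have hN0r : (0:ℝ) < N := by exact_mod_cast hN0
  -- subset into biUnion
  have hsub : FF N ⊆ (Finset.Icc 1 (m'+1)).biUnion (GG N) := by
    intro x hx
    simp only [FF, GG, Finset.mem_filter, Finset.mem_Icc, Finset.mem_biUnion] at hx ⊢
    obtain ⟨⟨hx1, hxN⟩, hev, hA⟩ := hx
    obtain ⟨k, hk1, hk4, hkee⟩ := (memArIff x).1 hA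
    have hkle : k ≤ m'+1 := by
      by_contra hc
      push_neg at hc
      have : 4^(m'+1+1) ≤ 4^k := Nat.pow_le_pow_right (by norm_num) (by omega)
      omega
    exact ⟨k, ⟨hk1, hkle⟩, ⟨hk4, le_min hxN hkee⟩, hev⟩
  have hcard : (FF N).card ≤ ∑ k ∈ Finset.Icc 1 (m'+1), (GG N k).card :=
    (Finset.card_le_card hsub).trans (Finset.card_biUnion_le)
  have hcardr : ((FF N).card : ℝ) ≤ ∑ k ∈ Finset.Icc 1 (m'+1), ((GG N k).card : ℝ) := by
    have := (Nat.cast_le (α := ℝ)).2 hcard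
    push_cast at this
    exact this
  have hsplit : ∑ k ∈ Finset.Icc 1 (m'+1), ((GG N k).card : ℝ)
      = ∑ k ∈ Finset.Icc 1 m', ((GG N k).card : ℝ) + ((GG N (m'+1)).card : ℝ) :=
    Finset.sum_Icc_succ_top (by omega) _
  have hmain : ∑ k ∈ Finset.Icc 1 m', ((GG N k).card : ℝ) ≤ ((4:ℝ)^(m'+1) - 4) / 6 := by
    calc ∑ k ∈ Finset.Icc 1 m', ((GG N k).card : ℝ)
        ≤ ∑ k ∈ Finset.Icc 1 m', (4:ℝ)^k / 2 := by
          apply Finset.sum_le_sum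
          intro k hk
          have hk1 : 1 ≤ k := (Finset.mem_Icc.1 hk).1
          have := (Nat.cast_le (α := ℝ)).2 (GG_card_ub N k hk1)
          push_cast at this
          linarith
      _ = (∑ k ∈ Finset.Icc 1 m', (4:ℝ)^k) / 2 := by rw [Finset.sum_div]
      _ = ((4:ℝ)^(m'+1) - 4) / 3 / 2 := by rw [geomIcc]
      _ = ((4:ℝ)^(m'+1) - 4) / 6 := by ring
  set nr : ℝ := ((m' + 1 : ℕ) : ℝ) with hnr
  have hnr0 : (0:ℝ) < nr := by rw [hnr]; exact_mod_cast Nat.succ_pos m'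
  have hx : (0:ℝ) < (4:ℝ)^(m'+1) := by positivity
  have hodd : (((N+1)/2 : ℕ) : ℝ) ≤ ((N:ℝ)+1)/2 := by
    have h := Nat.div_mul_le_self (N+1) 2
    have := (Nat.cast_le (α := ℝ)).2 h
    push_cast at this
    linarith
  have hNn : nr ≤ (N:ℝ) := by
    rw [hnr]
    have : m' + 1 ≤ N := le_trans (le_of_lt (Nat.lt_pow_self (by norm_num))) h1
    exact_mod_cast this
  have h3n : (3:ℝ) ≤ 3 / nr * N := by
    rw [div_mul_eq_mul_div, le_div_iff₀ hnr0]
    linarith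
  have hcount := countSplit N
  have hxN : (4:ℝ)^(m'+1) ≤ N := by exact_mod_cast h1
  rw [div_le_iff₀ hN0r, hcount]
  push_cast
  rcases le_or_gt N (ee (m'+1)) with hcase | hcase
  · -- inside the interval
    have hlast := GG_last_A N (m'+1) (by omega) h1 hcase
    have hlastr : ((GG N (m'+1)).card : ℝ) * 2 + 4^(m'+1) ≤ (N:ℝ) + 2 := by
      exact_mod_cast hlast
    have hN2x : (N:ℝ) < 2 * 4^(m'+1) := by
      have := lt_of_le_of_lt hcase (ee_lt (m'+1) (by omega))
      exact_mod_cast this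
    have hFr : ((FF N).card : ℝ)
        ≤ ((4:ℝ)^(m'+1) - 4)/6 + (((N:ℝ) + 2 - 4^(m'+1)) / 2) := by
      rw [hsplit] at hcardr
      linarith
    calc (((N+1)/2 : ℕ) : ℝ) + ((FF N).card : ℝ)
        ≤ ((N:ℝ)+1)/2 + (((4:ℝ)^(m'+1) - 4)/6 + (((N:ℝ) + 2 - 4^(m'+1)) / 2)) := by
          linarith
      _ ≤ (5/6 + 3/nr) * N := by nlinarith [h3n, hN2x]
  · -- in the gap
    have hlast := GG_last_B N (m'+1) (by omega) hcase
    have hlastr : ((GG N (m'+1)).card : ℝ) * 2 + 4^(m'+1) ≤ ((ee (m'+1) : ℕ) : ℝ) + 2 := by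
      exact_mod_cast hlast
    have hEub : ((ee (m'+1) : ℕ) : ℝ) ≤ (2 - 1/nr) * 4^(m'+1) := ee_real_ub (m'+1) (by omega)
    have hNlb : (2 - 1/nr) * 4^(m'+1) - 1 ≤ (N:ℝ) := by
      have hlb := ee_real_lb (m'+1) (by omega)
      have : ((ee (m'+1) : ℕ) : ℝ) + 1 ≤ N := by exact_mod_cast hcase
      linarith
    have hw0 : (0:ℝ) ≤ 4^(m'+1) / nr := by positivity
    have hFr : ((FF N).card : ℝ)
        ≤ ((4:ℝ)^(m'+1) - 4)/6 + ((2 - 1/nr) * 4^(m'+1) + 2 - 4^(m'+1)) / 2 := by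
      rw [hsplit] at hcardr
      linarith
    have hexp1 : (2 - 1/nr) * (4:ℝ)^(m'+1) = 2 * 4^(m'+1) - 4^(m'+1)/nr := by ring
    calc (((N+1)/2 : ℕ) : ℝ) + ((FF N).card : ℝ)
        ≤ ((N:ℝ)+1)/2 + (((4:ℝ)^(m'+1) - 4)/6
            + ((2 - 1/nr) * 4^(m'+1) + 2 - 4^(m'+1)) / 2) := by linarith
      _ ≤ (5/6 + 3/nr) * N := by
          rw [hexp1] at hNlb ⊢
          have hgoal : (5/6 + 3/nr) * N = 5/6 * N + 3/nr * N := by ring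
          rw [hgoal]
          linarith

lemma ratio_lb (n : ℕ) (hn : 2 ≤ n) :
    5/6 - 5/(n:ℝ) ≤ (countIn (Ar ∪ Od) (ee n) : ℝ) / (ee n) := by
  set N := ee n with hNdef
  have hN4 : 4^n ≤ N := ee_ge n hn
  have hN0 : 0 < N := lt_of_lt_of_le (Nat.pow_pos (by norm_num)) hN4
  have hN0r : (0:ℝ) < N := by exact_mod_cast hN0
  have hnr0 : (0:ℝ) < (n:ℝ) := by exact_mod_cast (by omega : 0 < n)
  have hnr2 : (2:ℝ) ≤ (n:ℝ) := by exact_mod_cast hn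
  -- biUnion is inside FF N
  have hsub : (Finset.Icc 2 n).biUnion
      (fun k => (Finset.Icc (4^k) (ee k)).filter (fun m => m % 2 = 0)) ⊆ FF N := by
    intro x hx
    simp only [Finset.mem_biUnion, Finset.mem_filter, Finset.mem_Icc, FF] at hx ⊢
    obtain ⟨k, ⟨hk2, hkn⟩, ⟨hk4, hke⟩, hev⟩ := hx
    have h4k : 1 ≤ 4^k := Nat.one_le_pow _ _ (by norm_num)
    refine ⟨⟨by omega, ?_⟩, hev, (memArIff x).2 ⟨k, by omega, hk4, hke⟩⟩
    rcases Nat.eq_or_lt_of_le hkn with rfl | hlt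
    · exact hke
    · have e1 : ee k < 2*4^k := ee_lt k (by omega)
      have e2 : (4:ℕ)^(k+1) = 4^k * 4 := pow_succ 4 k
      have e3 : 4^(k+1) ≤ 4^n := Nat.pow_le_pow_right (by norm_num) (by omega)
      omega
  -- disjointness
  have hdisj : ∀ k ∈ Finset.Icc 2 n, ∀ l ∈ Finset.Icc 2 n, k ≠ l →
      Disjoint ((Finset.Icc (4^k) (ee k)).filter (fun m => m % 2 = 0))
        ((Finset.Icc (4^l) (ee l)).filter (fun m => m % 2 = 0)) := by
    intro k hk l hl hkl
    simp only [Finset.mem_Icc] at hk hl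
    rw [Finset.disjoint_left]
    intro x hx1 hx2
    simp only [Finset.mem_filter, Finset.mem_Icc] at hx1 hx2
    rcases lt_or_gt_of_ne hkl with h | h
    · have e1 : ee k < 2*4^k := ee_lt k (by omega)
      have e2 : (4:ℕ)^(k+1) = 4^k * 4 := pow_succ 4 k
      have e3 : 4^(k+1) ≤ 4^l := Nat.pow_le_pow_right (by norm_num) (by omega)
      omega
    · have e1 : ee l < 2*4^l := ee_lt l (by omega)
      have e2 : (4:ℕ)^(l+1) = 4^l * 4 := pow_succ 4 l
      have e3 : 4^(l+1) ≤ 4^k := Nat.pow_le_pow_right (by norm_num) (by omega)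
      omega
  have hEC : ∑ k ∈ Finset.Icc 2 n,
      ((Finset.Icc (4^k) (ee k)).filter (fun m => m % 2 = 0)).card ≤ (FF N).card := by
    rw [← Finset.card_biUnion hdisj]
    exact Finset.card_le_card hsub
  -- real per-term lower bound
  have hterm : ∀ k ∈ Finset.Icc 2 n, (4:ℝ)^k/2 - 4^k/k/2 - 1/2
      ≤ (((Finset.Icc (4^k) (ee k)).filter (fun m => m % 2 = 0)).card : ℝ) := by
    intro k hk
    simp only [Finset.mem_Icc] at hk
    obtain ⟨hk2, _⟩ := hk
    have hk0 : (0:ℝ) < (k:ℝ) := by exact_mod_cast (by omega : 0 < k)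
    have hc : ee k + 1 ≤
        ((Finset.Icc (4^k) (ee k)).filter (fun m => m % 2 = 0)).card * 2 + 4^k := by
      rw [evenCard]
      have h1 := ee_ge k hk2
      have h2 := pow4_even k (by omega)
      omega
    have hcr : ((ee k : ℕ) : ℝ) + 1 ≤
        (((Finset.Icc (4^k) (ee k)).filter (fun m => m % 2 = 0)).card : ℝ) * 2 + 4^k := by
      exact_mod_cast hc
    have hlb := ee_real_lb k (by omega)
    have hexp : (2 - 1/(k:ℝ)) * 4^k = 2*4^k - 4^k/k := by ring
    rw [hexp] at hlb
    linarith
  -- sum bounds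
  have hg2 : ∑ k ∈ Finset.Icc 2 n, (4:ℝ)^k = (4^(n+1) - 4)/3 - 4 := by
    have hins : Finset.Icc 1 n = insert 1 (Finset.Icc 2 n) := by
      ext x; simp [Finset.mem_Icc, Finset.mem_insert]; omega
    have h := geomIcc n
    rw [hins, Finset.sum_insert (by simp)] at h
    linarith
  have hg3 : ∑ k ∈ Finset.Icc 2 n, (4:ℝ)^k/k ≤ 2*4^n/n := by
    calc ∑ k ∈ Finset.Icc 2 n, (4:ℝ)^k/k ≤ ∑ k ∈ Finset.Icc 1 n, (4:ℝ)^k/k := by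
          apply Finset.sum_le_sum_of_subset_of_nonneg
          · intro x; simp only [Finset.mem_Icc]; omega
          · intro k _ _; positivity
    _ ≤ 2*4^n/n := sumPowDiv n (by omega)
  have hconst : ∑ _k ∈ Finset.Icc 2 n, (1:ℝ)/2 ≤ (n:ℝ)/2 := by
    rw [Finset.sum_const, Nat.card_Icc, nsmul_eq_mul]
    have : ((n + 1 - 2 : ℕ) : ℝ) ≤ (n:ℝ) := by
      have : (n + 1 - 2 : ℕ) ≤ n := by omega
      exact_mod_cast this
    linarith
  have hsumlb : ((4:ℝ)^(n+1) - 16)/6 - (4:ℝ)^n/n - (n:ℝ)/2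
      ≤ ∑ k ∈ Finset.Icc 2 n,
        (((Finset.Icc (4^k) (ee k)).filter (fun m => m % 2 = 0)).card : ℝ) := by
    have h1 := Finset.sum_le_sum hterm
    have h2 : ∑ k ∈ Finset.Icc 2 n, ((4:ℝ)^k/2 - 4^k/k/2 - 1/2)
        = (∑ k ∈ Finset.Icc 2 n, (4:ℝ)^k)/2 - (∑ k ∈ Finset.Icc 2 n, (4:ℝ)^k/k)/2
          - ∑ _k ∈ Finset.Icc 2 n, (1:ℝ)/2 := by
      rw [Finset.sum_sub_distrib, Finset.sum_sub_distrib, Finset.sum_div, Finset.sum_div]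
    rw [h2] at h1
    have h3 : ((4:ℝ)^(n+1) - 16)/6 - (4:ℝ)^n/n - (n:ℝ)/2
        ≤ (∑ k ∈ Finset.Icc 2 n, (4:ℝ)^k)/2 - (∑ k ∈ Finset.Icc 2 n, (4:ℝ)^k/k)/2
          - ∑ _k ∈ Finset.Icc 2 n, (1:ℝ)/2 := by
      rw [hg2]
      have : (∑ k ∈ Finset.Icc 2 n, (4:ℝ)^k/k)/2 ≤ (2*4^n/n)/2 := by linarith
      have hxn : (2*(4:ℝ)^n/n)/2 = 4^n/n := by ring
      linarith
    linarith
  have hECr : ((4:ℝ)^(n+1) - 16)/6 - (4:ℝ)^n/n - (n:ℝ)/2 ≤ ((FF N).card : ℝ) := by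
    have := (Nat.cast_le (α := ℝ)).2 hEC
    push_cast at this
    linarith
  -- odd part
  have hoddlb : (N:ℝ)/2 ≤ (((N+1)/2 : ℕ) : ℝ) := by
    have h : N ≤ ((N+1)/2)*2 := by omega
    have := (Nat.cast_le (α := ℝ)).2 h
    push_cast at this
    linarith
  -- assemble
  have hcount := countSplit N
  rw [hcount]
  rw [le_div_iff₀ hN0r]
  push_cast
  have hN2x : (N:ℝ) ≤ 2 * 4^n := by
    have := ee_lt n (by omega)
    have : N ≤ 2*4^n := by omega
    exact_mod_cast this
  have hxN : (4:ℝ)^n ≤ N := by exact_mod_cast hN4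
  have hnn : (n:ℝ)*(n:ℝ) ≤ (4:ℝ)^n := by
    have h1 : n ≤ 2^n := le_of_lt (Nat.lt_two_pow_self)
    have h2 : n*n ≤ 4^n := by
      calc n*n ≤ 2^n * 2^n := Nat.mul_le_mul h1 h1
      _ = 4^n := by rw [← Nat.mul_pow]
    exact_mod_cast h2
  have hyn : (n:ℝ) ≤ (4:ℝ)^n/n := by
    rw [le_div_iff₀ hnr0]
    linarith
  have hzy : (4:ℝ)^n/n ≤ (N:ℝ)/n := by gcongr
  have h5z : 5/(n:ℝ) * N = 5 * ((N:ℝ)/n) := by ring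
  have hps : (4:ℝ)^(n+1) = 4 * 4^n := by rw [pow_succ]; ring
  rw [hps] at hECr
  nlinarith [hECr, hoddlb, hzy, hyn, hnr2, hN2x]

lemma ratio_le_one (N : ℕ) : (countIn (Ar ∪ Od) N : ℝ) / N ≤ 1 := by
  rcases Nat.eq_zero_or_pos N with rfl | hN
  · simp
  · have hN0 : (0:ℝ) < N := by exact_mod_cast hN
    rw [div_le_one hN0]
    have h : countIn (Ar ∪ Od) N ≤ (Finset.Icc 1 N).card := by
      unfold countIn
      have hcf := Finset.card_filter_le (Finset.Icc 1 N) (fun n => n ∈ Ar ∪ Od)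
      convert hcf using 3
    rw [Nat.card_Icc] at h
    have h2 : countIn (Ar ∪ Od) N ≤ N := by omega
    exact_mod_cast h2

lemma ratio_nonneg (N : ℕ) : (0:ℝ) ≤ (countIn (Ar ∪ Od) N : ℝ) / N := by positivity

lemma limsup_le : Filter.limsup (fun N => (countIn (Ar ∪ Od) N : ℝ) / N) Filter.atTop
    ≤ 5/6 := by
  apply le_of_forall_pos_le_add
  intro ε hε
  apply Filter.limsup_le_of_le
  · exact Filter.IsBoundedUnder.isCoboundedUnder_le
      ⟨0, Filter.eventually_map.2 (Filter.Eventually.of_forall (fun N => ratio_nonneg N))⟩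
  · obtain ⟨M, hM⟩ := exists_nat_gt (3/ε)
    have hM0 : (0:ℝ) < (M:ℝ)+1 := by positivity
    have hMε : 3/((M:ℝ)+1) < ε := by
      rw [div_lt_iff₀ hM0]
      have h1 : 3/ε < (M:ℝ)+1 := lt_trans hM (by linarith)
      calc (3:ℝ) = (3/ε) * ε := by field_simp
      _ < ((M:ℝ)+1) * ε := by
          apply mul_lt_mul_of_pos_right h1 hε
      _ = ε * ((M:ℝ)+1) := by ring
    filter_upwards [Filter.eventually_ge_atTop (4^(M+1))] with N hN
    have hN0 : N ≠ 0 := by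
      have : 0 < 4^(M+1) := Nat.pow_pos (by norm_num)
      omega
    set n := Nat.log 4 N with hndef
    have h1 : 4^n ≤ N := Nat.pow_log_le_self 4 hN0
    have h2 : N < 4^(n+1) := Nat.lt_pow_succ_log_self (by norm_num) N
    have hMn : M+1 ≤ n := by
      have hlt : (4:ℕ)^(M+1) < 4^(n+1) := lt_of_le_of_lt hN h2
      have := (Nat.pow_lt_pow_iff_right (by norm_num : 1 < 4)).1 hlt
      omega
    have hmain := ratio_ub N n (by omega) h1 h2
    have h3 : (3:ℝ)/(n:ℝ) ≤ 3/((M:ℝ)+1) := by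
      apply div_le_div_of_nonneg_left (by norm_num) hM0
      exact_mod_cast hMn
    linarith

lemma limsup_ge : (5:ℝ)/6 ≤ Filter.limsup (fun N => (countIn (Ar ∪ Od) N : ℝ) / N)
    Filter.atTop := by
  apply le_of_forall_pos_le_add
  intro ε hε
  have hfreq : ∃ᶠ N in Filter.atTop, 5/6 - ε ≤ (countIn (Ar ∪ Od) N : ℝ) / N := by
    rw [Filter.frequently_atTop]
    intro a
    obtain ⟨m, hm⟩ := exists_nat_gt (5/ε)
    have hm0 : 0 < m := by
      by_contra h
      push_neg at h
      have hm00 : m = 0 := by omega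
      subst hm00
      have : (0:ℝ) < 5/ε := by positivity
      simp only [Nat.cast_zero] at hm
      linarith
    set n := max (m + 2) a with hndef
    have hn2 : 2 ≤ n := le_trans (by omega) (le_max_left _ _)
    have hna : a ≤ n := le_max_right _ _
    refine ⟨ee n, ?_, ?_⟩
    · have h1 : n ≤ 4^n := le_of_lt (Nat.lt_pow_self (by norm_num))
      have h2 := ee_ge n hn2
      omega
    · have hmain := ratio_lb n hn2
      have hmn : (m:ℝ) ≤ (n:ℝ) := by
        have : m ≤ n := le_trans (by omega) (le_max_left _ _)
        exact_mod_cast this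
      have hm0r : (0:ℝ) < m := by exact_mod_cast hm0
      have hn0r : (0:ℝ) < n := by linarith
      have h5 : (5:ℝ)/(n:ℝ) ≤ 5/(m:ℝ) := div_le_div_of_nonneg_left (by norm_num) hm0r hmn
      have h6 : (5:ℝ)/(m:ℝ) < ε := by
        rw [div_lt_iff₀ hm0r]
        calc (5:ℝ) = (5/ε) * ε := by field_simp
        _ < (m:ℝ) * ε := mul_lt_mul_of_pos_right hm hε
        _ = ε * m := by ring
      linarith
  have hbdd : Filter.IsBoundedUnder (· ≤ ·) Filter.atTop
      (fun N => (countIn (Ar ∪ Od) N : ℝ) / N) :=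
    ⟨1, Filter.eventually_map.2 (Filter.Eventually.of_forall (fun N => ratio_le_one N))⟩
  have := Filter.le_limsup_of_frequently_le hfreq hbdd
  linarith

lemma memIff (m : ℕ) :
    (m ∈ ({m : ℕ | ∃ n : ℕ, 1 ≤ n ∧ 4 ^ n ≤ m ∧ (m : ℝ) < (2 - 1 / n) * 4 ^ n}
      : Set ℕ)) ↔ ∃ n : ℕ, 1 ≤ n ∧ 4 ^ n ≤ m ∧ m * n < (2 * n - 1) * 4 ^ n := by
  constructor
  · rintro ⟨n, h1, h2, h3⟩; exact ⟨n, h1, h2, (memIffAux m n h1).1 h3⟩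
  · rintro ⟨n, h1, h2, h3⟩; exact ⟨n, h1, h2, (memIffAux m n h1).2 h3⟩


set_option maxHeartbeats 1000000 in
lemma part2 : ∀ B : Set ℕ, B.Infinite →
    ¬ (∀ b₁ ∈ B, ∀ b₂ ∈ B,
        b₁ + b₂ ∈ ({m : ℕ | ∃ n : ℕ, 1 ≤ n ∧ 4 ^ n ≤ m ∧ (m : ℝ) < (2 - 1 / n) * 4 ^ n}
          ∪ {m : ℕ | m % 2 = 1})) := by
  intro B hB hsum
  -- find parity class with infinitely many elements
  have hpar : ∃ r, (B ∩ {m | m % 2 = r}).Infinite := by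
    by_contra h
    push_neg at h
    have h0 := h 0
    have h1 := h 1
    have hsub : B ⊆ (B ∩ {m | m % 2 = 0}) ∪ (B ∩ {m | m % 2 = 1}) := by
      intro x hx
      rcases Nat.mod_two_eq_zero_or_one x with hx2 | hx2
      · exact Or.inl ⟨hx, hx2⟩
      · exact Or.inr ⟨hx, hx2⟩
    exact hB ((h0.union h1).subset hsub)
  obtain ⟨r, hC⟩ := hpar
  obtain ⟨b₁, hb₁C, hb₁pos⟩ := hC.exists_gt 0
  obtain ⟨b₂, hb₂C, hb₂big⟩ := hC.exists_gt (8 * b₁ * b₁)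
  have hb₁B : b₁ ∈ B := hb₁C.1
  have hb₂B : b₂ ∈ B := hb₂C.1
  have hr : r ≤ 1 := by have := hb₁C.2; simp only [Set.mem_setOf_eq] at this; omega
  have hb1r : b₁ % 2 = r := hb₁C.2
  have hb2r : b₂ % 2 = r := hb₂C.2
  have hb₁b₂ : b₁ < b₂ := by nlinarith
  -- the two even sums
  have hc := hsum b₁ hb₁B b₂ hb₂B
  have hd := hsum b₂ hb₂B b₂ hb₂B
  have hceven : (b₁ + b₂) % 2 = 0 := by omega
  have hdeven : (b₂ + b₂) % 2 = 0 := by omega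
  have hcA : ∃ n : ℕ, 1 ≤ n ∧ 4 ^ n ≤ b₁ + b₂ ∧ (b₁ + b₂) * n < (2 * n - 1) * 4 ^ n := by
    rcases hc with h | h
    · exact (memIff _).1 h
    · simp only [Set.mem_setOf_eq] at h; omega
  have hdA : ∃ k : ℕ, 1 ≤ k ∧ 4 ^ k ≤ b₂ + b₂ ∧ (b₂ + b₂) * k < (2 * k - 1) * 4 ^ k := by
    rcases hd with h | h
    · exact (memIff _).1 h
    · simp only [Set.mem_setOf_eq] at h; omega
  obtain ⟨n, hn1, hcl, hcu⟩ := hcA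
  obtain ⟨k, hk1, hdl, hdu⟩ := hdA
  -- k = n
  have hkn : k = n := by
    rcases lt_trichotomy k n with h | h | h
    · -- k < n : then d < 2*4^k ≤ 4^n ≤ c < d, contradiction
      exfalso
      have hd2 : (b₂ + b₂) * k < 2 * k * 4 ^ k := lt_of_lt_of_le hdu (by
        have : (2*k-1) ≤ 2*k := by omega
        exact Nat.mul_le_mul_right _ this)
      have hd3 : b₂ + b₂ < 2 * 4 ^ k := by
        by_contra hcon
        push_neg at hcon
        have := Nat.mul_le_mul_right k hcon
        nlinarith
      have h4 : 2 * 4 ^ k ≤ 4 ^ n := by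
        calc 2 * 4 ^ k ≤ 4 * 4 ^ k := by omega
        _ = 4 ^ (k+1) := by ring
        _ ≤ 4 ^ n := Nat.pow_le_pow_right (by norm_num) (by omega)
      have : 4 ^ n ≤ b₁ + b₂ := hcl
      omega
    · exact h
    · -- k > n : 4^k ≤ d < 2c < 4*4^n = 4^(n+1) ≤ 4^k, contradiction
      exfalso
      have hc2 : (b₁ + b₂) * n < 2 * n * 4 ^ n := lt_of_lt_of_le hcu (by
        exact Nat.mul_le_mul_right _ (by omega))
      have hc3 : b₁ + b₂ < 2 * 4 ^ n := by
        by_contra hcon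
        push_neg at hcon
        have := Nat.mul_le_mul_right n hcon
        nlinarith
      have h4 : 4 ^ k ≤ b₂ + b₂ := hdl
      have h5 : b₂ + b₂ < 2 * (b₁ + b₂) := by omega
      have h6 : 4 ^ (n+1) ≤ 4 ^ k := Nat.pow_le_pow_right (by norm_num) (by omega)
      have : (4:ℕ) ^ (n+1) = 4 * 4 ^ n := by ring
      omega
  subst hkn
  -- now derive b₂ < (2k-1) * b₁
  obtain ⟨n', rfl⟩ : ∃ n', k = n' + 1 := ⟨k - 1, by omega⟩
  have hsub : 2 * (n' + 1) - 1 = 2 * n' + 1 := by omega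
  rw [hsub] at hdu hcu
  set P := 4 ^ (n' + 1) with hP
  -- d*(n'+1) < (2n'+1)*P ≤ (2n'+1)*c  (since P ≤ c)
  have key1 : (b₂ + b₂) * (n' + 1) < (2 * n' + 1) * (b₁ + b₂) := by
    calc (b₂ + b₂) * (n' + 1) < (2 * n' + 1) * P := hdu
    _ ≤ (2 * n' + 1) * (b₁ + b₂) := Nat.mul_le_mul_left _ hcl
  have key2 : b₂ < (2 * n' + 1) * b₁ := by nlinarith
  -- P ≤ c ≤ 2(n'+1) b₁
  have key3 : P ≤ 2 * (n' + 1) * b₁ := by nlinarith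
  -- n'+1 ≤ 2^(n'+1), P = 2^(n'+1) * 2^(n'+1)
  have hpow : (n' + 1) ≤ 2 ^ (n' + 1) := le_of_lt (Nat.lt_two_pow_self)
  have hP2 : P = 2 ^ (n' + 1) * 2 ^ (n' + 1) := by
    rw [hP, show (4:ℕ) = 2 * 2 by norm_num, mul_pow]
  have key4 : (n' + 1) * 2 ^ (n' + 1) ≤ 2 * (n' + 1) * b₁ := by
    calc (n' + 1) * 2 ^ (n' + 1) ≤ 2 ^ (n' + 1) * 2 ^ (n' + 1) :=
      Nat.mul_le_mul_right _ hpow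
    _ = P := hP2.symm
    _ ≤ 2 * (n' + 1) * b₁ := key3
  have key5 : 2 ^ (n' + 1) ≤ 2 * b₁ := by
    have h := key4
    have : (n' + 1) * 2 ^ (n' + 1) ≤ (n' + 1) * (2 * b₁) := by ring_nf at h ⊢; linarith
    exact Nat.le_of_mul_le_mul_left this (by omega)
  have key6 : 2 * n' + 1 ≤ 4 * b₁ := by
    have : n' + 1 ≤ 2 * b₁ := le_trans hpow key5
    omega
  have : b₂ < 4 * b₁ * b₁ := lt_of_lt_of_le key2 (Nat.mul_le_mul_right _ key6)
  nlinarith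

theorem example_five_sixths :
    upperDensity ({m : ℕ | ∃ n : ℕ, 1 ≤ n ∧ 4 ^ n ≤ m ∧ (m : ℝ) < (2 - 1 / n) * 4 ^ n}
        ∪ {m : ℕ | m % 2 = 1}) = 5 / 6 ∧
    ∀ B : Set ℕ, B.Infinite →
      ¬ (∀ b₁ ∈ B, ∀ b₂ ∈ B,
          b₁ + b₂ ∈ ({m : ℕ | ∃ n : ℕ, 1 ≤ n ∧ 4 ^ n ≤ m ∧ (m : ℝ) < (2 - 1 / n) * 4 ^ n}
            ∪ {m : ℕ | m % 2 = 1})) := by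
  constructor
  · have h := le_antisymm limsup_le limsup_ge
    exact h
  · exact part2
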